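/- Let g > 0 and h_min : ℝ² → ℝ be a continuously differentiable terrain function. Suppose at a point y we have V(y) = h_min(y), V is differentiable at y, and ‖∇h_min(y)‖ > 1/g. Then the ansatz ∇V(y) = ∇h_min(y) satisfies the constrained HJB equation max_{â ∈ S¹} (∇V(y) · â) / max(1/g, ∇h_min(y) · â) = 1, with the maximum attained at â = ∇h_min(y)/‖∇h_min(y)‖. -/

import Mathlib

open RealInnerProductSpace

/-- Obstacle-interaction case of the MRAP HJB equation: if at `y` the value `V`
touches the terrain `h_min`, the terrain is steeper than the glide slope
(`‖∇h_min(y)‖ > 1/g`), and `∇V(y) = ∇h_min(y)`, then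
`max over unit a of (∇V(y)·a)/max(1/g, ∇h_min(y)·a)` equals `1`, attained at
`a = ∇h_min(y)/‖∇h_min(y)‖`. -/
theorem stmt_5 (g : ℝ) (hg : 0 < g)
    (hmin V : EuclideanSpace ℝ (Fin 2) → ℝ)
    (hsmooth : ContDiff ℝ 1 hmin)
    (y : EuclideanSpace ℝ (Fin 2))
    (htouch : V y = hmin y)
    (hdiff : DifferentiableAt ℝ V y)
    (hsteep : ‖gradient hmin y‖ > 1 / g)
    (hansatz : gradient V y = gradient hmin y) :
    (∀ a : EuclideanSpace ℝ (Fin 2), ‖a‖ = 1 →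
      ⟪gradient V y, a⟫ / max (1 / g) ⟪gradient hmin y, a⟫ ≤ 1) ∧
    ⟪gradient V y, ‖gradient hmin y‖⁻¹ • gradient hmin y⟫ /
      max (1 / g) ⟪gradient hmin y, ‖gradient hmin y‖⁻¹ • gradient hmin y⟫ = 1 := by
  have hgpos : 0 < 1 / g := by positivity
  have hppos : 0 < ‖gradient hmin y‖ := lt_trans hgpos hsteep
  constructor
  · intro a ha
    rw [hansatz]
    apply div_le_one_of_le₀
    · exact le_max_right _ _
    · exact le_trans hgpos.le (le_max_left _ _)
  · rw [hansatz]
    have hinner : ⟪gradient hmin y, ‖gradient hmin y‖⁻¹ • gradient hmin y⟫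
        = ‖gradient hmin y‖ := by
      rw [real_inner_smul_right, real_inner_self_eq_norm_sq]
      field_simp
    rw [hinner, max_eq_right hsteep.le, div_self hppos.ne']
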